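/- arXiv:1707.03457 — 5 statements merged into one kernel-verified Lean document; each statement's English description precedes it below -/
import Mathlib

section
/- Every nonempty string over a finite alphabet decomposes into at most |Ω| blocks each beginning and ending with the same symbol: for every finite alphabet Ω and every nonempty string w over Ω there exist n with 1 ≤ n ≤ |Ω| and nonempty strings w_1, …, w_n with w = w_1 w_2 ⋯ w_n such that for each i the first and last symbols of w_i are equal. -/
private lemma aux9 {Ω : Type} [DecidableEq Ω] :
    ∀ n (w : List Ω), w.toFinset.card ≤ n → w ≠ [] →
      ∃ ws : List (List Ω), 1 ≤ ws.length ∧ ws.length ≤ w.toFinset.card ∧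
        ws.flatten = w ∧ ∀ wi ∈ ws, wi ≠ [] ∧ wi.head? = wi.getLast? := by
  intro n
  induction n with
  | zero =>
    intro w hc hne
    exfalso
    obtain ⟨a, t, rfl⟩ := List.exists_cons_of_ne_nil hne
    have : (a :: t).toFinset.card ≠ 0 := Finset.card_ne_zero.mpr ⟨a, by simp⟩
    omega
  | succ n ih =>
    intro w hc hne
    obtain ⟨a, t, rfl⟩ := List.exists_cons_of_ne_nil hne
    set r := (a :: t).reverse with hr
    set v := (r.takeWhile (· ≠ a)).reverse with hv
    set u := (r.dropWhile (· ≠ a)).reverse with hu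
    have hw_eq : u ++ v = a :: t := by
      rw [hu, hv, ← List.reverse_append, List.takeWhile_append_dropWhile, hr,
        List.reverse_reverse]
    have hmem : a ∈ r := by simp [hr]
    have hune : u ≠ [] := by
      simp only [hu, ne_eq, List.reverse_eq_nil_iff, List.dropWhile_eq_nil_iff]
      intro h
      simpa using h a hmem
    have huhead : u.head? = some a := by
      have := congrArg List.head? hw_eq
      rwa [List.head?_append_of_ne_nil _ hune] at this
    have hdne : List.dropWhile (fun x => decide (x ≠ a)) r ≠ [] := fun h =>
      hune (by rw [hu, h, List.reverse_nil])
    obtain ⟨b, d, hd⟩ := List.exists_cons_of_ne_nil hdne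
    have hb := List.head_dropWhile_not (fun x => decide (x ≠ a)) hdne
    simp only [hd, List.head_cons, decide_eq_false_iff_not, not_not] at hb
    have hulast : u.getLast? = some a := by
      rw [hu, List.getLast?_reverse, hd, List.head?_cons, hb]
    have hva : a ∉ v := by
      simp only [hv, List.mem_reverse]
      intro h
      simpa using List.mem_takeWhile_imp h
    have hvsub : v.toFinset ⊆ (a :: t).toFinset.erase a := by
      intro x hx
      rw [Finset.mem_erase]
      refine ⟨?_, ?_⟩
      · rintro rfl; exact hva (by simpa using hx)
      · rw [← hw_eq]; simp at hx ⊢; tauto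
    have hvcard : v.toFinset.card ≤ n := by
      calc v.toFinset.card ≤ ((a :: t).toFinset.erase a).card := Finset.card_le_card hvsub
        _ = (a :: t).toFinset.card - 1 := by
            rw [Finset.card_erase_of_mem (by simp)]
        _ ≤ n := by omega
    have hcard1 : 1 ≤ (a :: t).toFinset.card := Finset.card_pos.mpr ⟨a, by simp⟩
    by_cases hvne : v = []
    · refine ⟨[u], by simp, by simpa using hcard1, by simp [hvne] at hw_eq; simp [hw_eq], ?_⟩
      intro wi hwi
      simp at hwi
      subst hwi
      exact ⟨hune, by rw [huhead, hulast]⟩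
    · obtain ⟨ws, h1, h2, h3, h4⟩ := ih v hvcard hvne
      refine ⟨u :: ws, by simp, ?_, by simp [h3, hw_eq], ?_⟩
      · have : (a :: t).toFinset.card = ((a :: t).toFinset.erase a).card + 1 := by
          rw [Finset.card_erase_of_mem (by simp)]; omega
        have h2' : ws.length ≤ ((a :: t).toFinset.erase a).card :=
          h2.trans (Finset.card_le_card hvsub)
        simp only [List.length_cons]
        omega
      · rintro wi (h | h)
        · exact ⟨hune, by rw [huhead, hulast]⟩
        · exact h4 wi (by assumption)

/-- Every nonempty string over a finite alphabet `Ω` decomposes into at most `|Ω|`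
nonempty blocks, each beginning and ending with the same symbol. -/
theorem stmt9 {Ω : Type} [Fintype Ω] (w : List Ω) (hw : w ≠ []) :
    ∃ ws : List (List Ω),
      1 ≤ ws.length ∧ ws.length ≤ Fintype.card Ω ∧ ws.flatten = w ∧
        ∀ wi ∈ ws, wi ≠ [] ∧ wi.head? = wi.getLast? := by
  classical
  obtain ⟨ws, h1, h2, h3, h4⟩ := aux9 w.toFinset.card w le_rfl hw
  exact ⟨ws, h1, h2.trans (Finset.card_le_card (Finset.subset_univ _) |>.trans_eq
    (Finset.card_univ)), h3, h4⟩
end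

section
/- In a context-free grammar generating only strings with balanced parentheses, each nonterminal has a constant parenthesis-balance: let G be a reduced context-free grammar over an alphabet containing distinguished symbols ℓ and r, and for w define c(w) = #_ℓ(w) − #_r(w). If c(w) = 0 for every w ∈ L(G) and moreover every prefix of every w ∈ L(G) has c ≥ 0, then for every nonterminal A of G there is an integer c(A) such that c(w) = c(A) for all terminal strings w derivable from A. -/
private lemma sentential_to_terminal {T : Type} (g : ContextFreeGrammar T)
    (hprod : ∀ A : g.NT, ∃ w : List T,
        g.Derives [Symbol.nonterminal A] (w.map Symbol.terminal)) :
    ∀ s : List (Symbol T g.NT), ∃ t : List T, g.Derives s (t.map Symbol.terminal) := by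
  intro s
  induction s with
  | nil => exact ⟨[], ContextFreeGrammar.Derives.refl _⟩
  | cons x s ih =>
    obtain ⟨t, ht⟩ := ih
    cases x with
    | terminal a =>
      exact ⟨a :: t, by simpa using ht.append_left [Symbol.terminal a]⟩
    | nonterminal A =>
      obtain ⟨w, hw⟩ := hprod A
      refine ⟨w ++ t, ?_⟩
      have h1 : g.Derives (Symbol.nonterminal A :: s)
          ([Symbol.nonterminal A] ++ t.map Symbol.terminal) := by
        simpa using ht.append_left [Symbol.nonterminal A]
      have h2 := hw.append_right (t.map Symbol.terminal)
      simpa using h1.trans h2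

/-- Knuth's lemma on parenthesis grammars: let `g` be a reduced context-free grammar over
an alphabet containing distinguished symbols `l` and `r`, and let
`c(w) = #_l(w) − #_r(w)`. If every word of `L(g)` is balanced (`c(w) = 0`) and every
prefix `u` of every word of `L(g)` satisfies `c(u) ≥ 0`, then every nonterminal `A` of
`g` has a constant balance: there is an integer `c(A)` with `c(w) = c(A)` for every
terminal word `w` derivable from `A`. -/
theorem stmt14 {T : Type} [DecidableEq T] (g : ContextFreeGrammar T) (l r : T)
    (hlr : l ≠ r)
    (hreach : ∀ A : g.NT, ∃ u v : List (Symbol T g.NT),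
        g.Derives [Symbol.nonterminal g.initial] (u ++ [Symbol.nonterminal A] ++ v))
    (hprod : ∀ A : g.NT, ∃ w : List T,
        g.Derives [Symbol.nonterminal A] (w.map Symbol.terminal))
    (hbal : ∀ w ∈ g.language, (w.count l : ℤ) - (w.count r : ℤ) = 0)
    (hpre : ∀ w ∈ g.language, ∀ u : List T, u <+: w →
        0 ≤ (u.count l : ℤ) - (u.count r : ℤ)) :
    ∀ A : g.NT, ∃ z : ℤ, ∀ w : List T,
      g.Derives [Symbol.nonterminal A] (w.map Symbol.terminal) →
      (w.count l : ℤ) - (w.count r : ℤ) = z := by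
  intro A
  obtain ⟨u, v, huv⟩ := hreach A
  obtain ⟨tu, htu⟩ := sentential_to_terminal g hprod u
  obtain ⟨tv, htv⟩ := sentential_to_terminal g hprod v
  refine ⟨-((tu.count l : ℤ) - tu.count r) - ((tv.count l : ℤ) - tv.count r), ?_⟩
  intro w hw
  have hmem : (tu ++ w ++ tv) ∈ g.language := by
    rw [ContextFreeGrammar.mem_language_iff]
    have h1 : g.Derives (u ++ [Symbol.nonterminal A] ++ v)
        (tu.map Symbol.terminal ++ w.map Symbol.terminal ++ tv.map Symbol.terminal) := by
      have s1 : g.Derives (u ++ [Symbol.nonterminal A] ++ v)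
          (tu.map Symbol.terminal ++ [Symbol.nonterminal A] ++ v) := by
        simpa only [List.append_assoc] using htu.append_right ([Symbol.nonterminal A] ++ v)
      have s2 : g.Derives (tu.map Symbol.terminal ++ [Symbol.nonterminal A] ++ v)
          (tu.map Symbol.terminal ++ w.map Symbol.terminal ++ v) :=
        (hw.append_left (tu.map Symbol.terminal)).append_right v
      have s3 : g.Derives (tu.map Symbol.terminal ++ w.map Symbol.terminal ++ v)
          (tu.map Symbol.terminal ++ w.map Symbol.terminal ++ tv.map Symbol.terminal) :=
        htv.append_left _
      exact (s1.trans s2).trans s3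
    simpa [List.append_assoc] using huv.trans h1
  have := hbal _ hmem
  simp only [List.count_append, Nat.cast_add] at this
  linarith
end

section
/- In a trim (reduced) grammar setting, an almost-growing derivation-size bound holds: suppose every derivation tree node is labeled by a rule, terminal rules (rank-0 rules) and monic rules (rank-1 rules) each contribute at least one lexical occurrence to the generated tree except possibly finitely many initial terminal rules, and the generated object's lexical-symbol count equals the sum of lexical-symbol counts of the rules used. Then for every derivation tree d whose root is not an initial terminal rule, |pos(d)| + 1 ≤ 2·(L(d) + B(d)), where L(d) is the number of lexical occurrences in the value of d and B(d) is the number of leaves of d labeled by nonterminals; in particular |pos(d)| ≤ 2·(L(d) + B(d)) + 1 always. -/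
/-- Derivation trees: every node carries a label (a rule or a big nonterminal)
and a list of subtrees. -/
inductive DTree (A : Type) : Type where
  | node : A → List (DTree A) → DTree A

namespace DTree

variable {A : Type}

/-- The number of positions (nodes) of a derivation tree. -/
def size : DTree A → ℕ
  | node _ ts => 1 + (ts.attach.map (fun x => size x.1)).sum
  decreasing_by simp only [DTree.node.sizeOf_spec]; have := List.sizeOf_lt_of_mem x.2; omega

/-- The label of the root. -/
def rootLabel : DTree A → A
  | node a _ => a

/-- `lexSum lex d` is the sum, over all nodes of `d`, of the number `lex a` of lexical
occurrences contributed by the label `a` of the node; it equals the number of lexical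
occurrences in the value of the derivation tree `d`. -/
def lexSum (lex : A → ℕ) : DTree A → ℕ
  | node a ts => lex a + (ts.attach.map (fun x => lexSum lex x.1)).sum
  decreasing_by simp only [DTree.node.sizeOf_spec]; have := List.sizeOf_lt_of_mem x.2; omega

/-- The number of leaves of `d` whose label is not a rule (i.e. is a big nonterminal). -/
def ntLeaves (isRule : A → Prop) [DecidablePred isRule] : DTree A → ℕ
  | node a ts =>
      (if ts.isEmpty ∧ ¬ isRule a then 1 else 0) +
        (ts.attach.map (fun x => ntLeaves isRule x.1)).sum
  decreasing_by simp only [DTree.node.sizeOf_spec]; have := List.sizeOf_lt_of_mem x.2; omega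

/-- The labels of all nodes of a derivation tree. -/
def allLabels : DTree A → List A
  | node a ts => a :: (ts.attach.map (fun x => allLabels x.1)).flatten
  decreasing_by simp only [DTree.node.sizeOf_spec]; have := List.sizeOf_lt_of_mem x.2; omega

/-- The labels of all non-root nodes of a derivation tree. -/
def nonRootLabels : DTree A → List A
  | node _ ts => (ts.map allLabels).flatten

/-- Well-formedness with respect to a rank function: the number of children of a node
equals the rank of its label. -/
inductive WF (rk : A → ℕ) : DTree A → Prop where
  | node (a : A) (ts : List (DTree A)) :
      ts.length = rk a → (∀ t ∈ ts, WF rk t) → WF rk (node a ts)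

end DTree

namespace DTree

variable {A : Type}

theorem size_node (a : A) (ts : List (DTree A)) :
    size (node a ts) = 1 + (ts.map size).sum := by
  rw [size]; simp

theorem lexSum_node (lex : A → ℕ) (a : A) (ts : List (DTree A)) :
    lexSum lex (node a ts) = lex a + (ts.map (lexSum lex)).sum := by
  rw [lexSum]; simp

theorem ntLeaves_node (isRule : A → Prop) [DecidablePred isRule] (a : A) (ts : List (DTree A)) :
    ntLeaves isRule (node a ts) =
      (if ts.isEmpty ∧ ¬ isRule a then 1 else 0) + (ts.map (ntLeaves isRule)).sum := by
  rw [ntLeaves]; simp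

theorem allLabels_node (a : A) (ts : List (DTree A)) :
    allLabels (node a ts) = a :: (ts.map allLabels).flatten := by
  rw [allLabels]; simp

theorem rootLabel_mem_allLabels (d : DTree A) : rootLabel d ∈ allLabels d := by
  cases d with
  | node a ts => rw [allLabels_node]; simp [rootLabel]

theorem nonRootLabels_subset_allLabels (d : DTree A) :
    ∀ x ∈ nonRootLabels d, x ∈ allLabels d := by
  cases d with
  | node a ts =>
    intro x hx
    rw [allLabels_node]
    simp only [nonRootLabels] at hx
    simp [hx]

theorem sum_key (l : List (DTree A)) (f g h : DTree A → ℕ)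
    (H : ∀ t ∈ l, f t + 1 ≤ 2 * (g t + h t)) :
    (l.map f).sum + l.length ≤ 2 * ((l.map g).sum + (l.map h).sum) := by
  induction l with
  | nil => simp
  | cons x xs ih =>
    have h1 := H x (by simp)
    have h2 := ih (fun t ht => H t (by simp [ht]))
    simp only [List.map_cons, List.sum_cons, List.length_cons]
    omega

end DTree

open DTree in
theorem stmt16_aux {A : Type} (rk : A → ℕ) (isRule : A → Prop) [DecidablePred isRule]
    (lex : A → ℕ) (I : Set A)
    (hNTrank : ∀ a : A, ¬ isRule a → rk a = 0)
    (hterm : ∀ a : A, isRule a → rk a = 0 → a ∉ I → 1 ≤ lex a)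
    (hmonic : ∀ a : A, isRule a → rk a = 1 → 1 ≤ lex a)
    (d : DTree A) (hwf : WF rk d)
    (hsep : ∀ a ∈ nonRootLabels d, a ∉ I) :
    (rootLabel d ∉ I →
        size d + 1 ≤ 2 * (lexSum lex d + ntLeaves isRule d)) ∧
      size d ≤ 2 * (lexSum lex d + ntLeaves isRule d) + 1 := by
  match d, hwf, hsep with
  | DTree.node a ts, hwf, hsep =>
    obtain ⟨_, _, hlen, hwfs⟩ := hwf
    simp only [nonRootLabels] at hsep
    have hsepc : ∀ t ∈ ts, ∀ x ∈ allLabels t, x ∉ I := by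
      intro t ht x hx
      exact hsep x (by simp only [List.mem_flatten]; exact ⟨allLabels t, List.mem_map_of_mem ht, hx⟩)
    have IH : ∀ t ∈ ts, size t + 1 ≤ 2 * (lexSum lex t + ntLeaves isRule t) := by
      intro t ht
      have h := stmt16_aux rk isRule lex I hNTrank hterm hmonic t (hwfs t ht)
        (fun x hx => hsepc t ht x (nonRootLabels_subset_allLabels t x hx))
      exact h.1 (hsepc t ht _ (rootLabel_mem_allLabels t))
    have hS : (ts.map size).sum + ts.length ≤
        2 * ((ts.map (lexSum lex)).sum + (ts.map (ntLeaves isRule)).sum) :=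
      sum_key ts size (lexSum lex) (ntLeaves isRule) IH
    rw [size_node, lexSum_node, ntLeaves_node]
    refine ⟨?_, by omega⟩
    intro hroot
    simp only [rootLabel] at hroot
    by_cases hempty : ts = []
    · subst hempty
      simp only [List.isEmpty_nil, true_and, List.map_nil, List.sum_nil, List.length_nil] at *
      by_cases hr : isRule a
      · have := hterm a hr hlen.symm hroot
        simp only [hr, not_true_eq_false, if_false]
        omega
      · simp only [hr, not_false_eq_true, if_true]
        omega
    · have hne : ts.isEmpty = false := by simpa using hempty
      simp only [hne, Bool.false_eq_true, false_and, if_false]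
      have hpos : 1 ≤ ts.length := List.length_pos_iff.mpr hempty
      by_cases hr : isRule a
      · rcases Nat.lt_or_ge ts.length 2 with h2 | h2
        · have h1 : ts.length = 1 := by omega
          have := hmonic a hr (by rw [← hlen, h1])
          omega
        · omega
      · exfalso
        have := hNTrank a hr
        omega
termination_by sizeOf d
decreasing_by simp only [DTree.node.sizeOf_spec]; have := List.sizeOf_lt_of_mem ht; omega

open DTree in
/-- The almost-growing derivation-size bound (inequality (†) of Lemma 3.11): in a setting
where nonterminals have rank `0` and contribute no lexical occurrences, every terminal
(rank-`0`) rule that is not one of the finitely many initial terminal rules `I` and every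
monic (rank-`1`) rule contributes at least one lexical occurrence, and initial terminal
rules can occur only at the root of a derivation tree, every derivation tree `d` whose
root is not an initial terminal rule satisfies
`|pos(d)| + 1 ≤ 2·(L(d) + B(d))`, where `L(d)` is the number of lexical occurrences in
the value of `d` and `B(d)` the number of leaves of `d` labeled by nonterminals; in
particular `|pos(d)| ≤ 2·(L(d) + B(d)) + 1` always holds. -/
theorem stmt16 {A : Type} (rk : A → ℕ) (isRule : A → Prop) [DecidablePred isRule]
    (lex : A → ℕ) (I : Set A) (hIfin : I.Finite)
    (hNTrank : ∀ a : A, ¬ isRule a → rk a = 0)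
    (hNTlex : ∀ a : A, ¬ isRule a → lex a = 0)
    (hI : ∀ a ∈ I, isRule a ∧ rk a = 0)
    (hterm : ∀ a : A, isRule a → rk a = 0 → a ∉ I → 1 ≤ lex a)
    (hmonic : ∀ a : A, isRule a → rk a = 1 → 1 ≤ lex a)
    (d : DTree A) (hwf : WF rk d)
    (hsep : ∀ a ∈ nonRootLabels d, a ∉ I) :
    (rootLabel d ∉ I →
        size d + 1 ≤ 2 * (lexSum lex d + ntLeaves isRule d)) ∧
      size d ≤ 2 * (lexSum lex d + ntLeaves isRule d) + 1 :=
  stmt16_aux rk isRule lex I hNTrank hterm hmonic d hwf hsep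
end

section
/- If an MCFTG-style grammar is almost Δ-growing, then it has finite Δ-ambiguity: abstractly, let V : D → T be a map from a set D of derivation trees to generated trees such that for every d ∈ D the number of Δ-labeled positions of V(d) satisfies |pos(d)| ≤ 2·|pos_Δ(V(d))| + 1, and such that for each fixed size bound there are only finitely many derivation trees of that size. Then for every n the set {V(d) : d ∈ D, |pos_Δ(V(d))| = n} is finite; hence {t ∈ V(D) : t has exactly n occurrences of Δ-symbols} is finite for every n. -/
/-- Almost-growing grammars are finitely ambiguous (abstract version of Lemma 3.11):
if `V : D → T` maps derivation trees to generated trees, `sz d ≤ 2·lexcount (V d) + 1`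
for every derivation tree `d`, and there are only finitely many derivation trees of each
size, then for every `n` only finitely many derivation trees have a value with exactly
`n` lexical occurrences, and hence only finitely many generated trees have exactly `n`
lexical occurrences. -/
theorem stmt17 {D T : Type} (V : D → T) (sz : D → ℕ) (lexcount : T → ℕ)
    (h1 : ∀ d : D, sz d ≤ 2 * lexcount (V d) + 1)
    (h2 : ∀ n : ℕ, {d : D | sz d = n}.Finite) :
    (∀ n : ℕ, {d : D | lexcount (V d) = n}.Finite) ∧
      ∀ n : ℕ, {t : T | t ∈ Set.range V ∧ lexcount t = n}.Finite := by
  have key : ∀ n : ℕ, {d : D | lexcount (V d) = n}.Finite := by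
    intro n
    have : {d : D | lexcount (V d) = n} ⊆ ⋃ k ∈ Finset.range (2 * n + 2), {d : D | sz d = k} := by
      intro d hd
      simp only [Set.mem_iUnion, Set.mem_setOf_eq, Finset.mem_range]
      have hd' : lexcount (V d) = n := hd
      exact ⟨sz d, by have := h1 d; omega, rfl⟩
    exact Set.Finite.subset (Set.Finite.biUnion (Finset.finite_toSet _) fun k _ => h2 k) this
  refine ⟨key, fun n => ?_⟩
  have : {t : T | t ∈ Set.range V ∧ lexcount t = n} ⊆ V '' {d : D | lexcount (V d) = n} := by
    rintro t ⟨⟨d, rfl⟩, ht⟩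
    exact ⟨d, ht, rfl⟩
  exact Set.Finite.subset ((key n).image V) this
end

section
/- Sufficiency of the skeleton decomposition bound: for every ranked alphabet Ω and every tree u over Ω with variables such that u is not itself a variable and contains at least one variable occurrence, there exist m ≥ 1, a footed pattern u_ε of rank m over Ω (a pattern having a node all of whose m children are the variables x_1,…,x_m in order), and trees u_1,…,u_m such that u = u_ε[x_i ← u_i | 1 ≤ i ≤ m] and for every i with u_i not a variable, the number of variable occurrences in u_i is strictly smaller than that in u. -/
inductive PTree (S : Type) : Type where
  | var  : ℕ → PTree S
  | node : S → List (PTree S) → PTree S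

namespace PTree

variable {S D O : Type}

/-- The number of occurrences of the variable `x_i` in a tree. -/
def countVar (i : ℕ) : PTree S → ℕ
  | var j => if j = i then 1 else 0
  | node _ ts => (ts.attach.map (fun x => countVar i x.1)).sum
  decreasing_by simp only [PTree.node.sizeOf_spec]; have := List.sizeOf_lt_of_mem x.2; omega

/-- The number of occurrences of the symbol `s` in a tree. -/
def countSym [DecidableEq S] (s : S) : PTree S → ℕ
  | var _ => 0
  | node s' ts => (if s' = s then 1 else 0) + (ts.attach.map (fun x => countSym s x.1)).sum
  decreasing_by simp only [PTree.node.sizeOf_spec]; have := List.sizeOf_lt_of_mem x.2; omega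

/-- First-order substitution: replace each variable `x_i` by `f i`. -/
def subst (f : ℕ → PTree S) : PTree S → PTree S
  | var i => f i
  | node s ts => node s (ts.attach.map (fun x => subst f x.1))
  decreasing_by simp only [PTree.node.sizeOf_spec]; have := List.sizeOf_lt_of_mem x.2; omega

/-- The tree map `ĥ` induced by a tree homomorphism `h`. -/
def hmap (h : S → PTree D) : PTree S → PTree D
  | var i => var i
  | node s ts =>
      subst (fun i => (ts.attach.map (fun x => hmap h x.1)).getD (i - 1) (var i)) (h s)
  decreasing_by simp only [PTree.node.sizeOf_spec]; have := List.sizeOf_lt_of_mem x.2; omega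

/-- Well-formedness of a tree over a ranked alphabet: the number of children of
a node equals the rank of its label. -/
inductive WF (rk : S → ℕ) : PTree S → Prop where
  | var (i : ℕ) : WF rk (var i)
  | node (s : S) (ts : List (PTree S)) :
      ts.length = rk s → (∀ t ∈ ts, WF rk t) → WF rk (node s ts)

/-- `t` is a `k`-ary pattern: each of the variables `x_1, …, x_k` occurs exactly once
in `t`, and no other variable occurs in `t`. -/
def IsPattern (k : ℕ) (t : PTree S) : Prop :=
  ∀ i : ℕ, countVar i t = if 1 ≤ i ∧ i ≤ k then 1 else 0

/-- The left-to-right sequence of (indices of) variable occurrences in a tree. -/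
def varYield : PTree S → List ℕ
  | var i => [i]
  | node _ ts => (ts.attach.map (fun x => varYield x.1)).flatten
  decreasing_by simp only [PTree.node.sizeOf_spec]; have := List.sizeOf_lt_of_mem x.2; omega

/-- The subtree at a given position (children of a node are numbered `0, 1, …`). -/
def subt? : List ℕ → PTree S → Option (PTree S)
  | [], t => some t
  | _ :: _, var _ => none
  | i :: p, node _ ts =>
      match ts[i]? with
      | some t => subt? p t
      | none => none

/-- Plug the tree `u` into the hole `□` (encoded as the variable `x_0`) of a context `c`. -/
def plug (c u : PTree S) : PTree S :=
  subst (fun i => if i = 0 then u else var i) c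

/-- `init(s) = s(x_1, …, x_{rk s})`. -/
def initT (rk : S → ℕ) (s : S) : PTree S :=
  node s ((List.range (rk s)).map (fun i => var (i + 1)))

/-- The tree homomorphism corresponding to the second-order substitution `[σs ← us]`:
it maps the `i`-th symbol of `σs` to the `i`-th pattern of `us` and any other symbol
`τ` to `init(τ)`. -/
def soHom [DecidableEq S] (rk : S → ℕ) (σs : List S) (us : List (PTree S)) : S → PTree S :=
  fun s => us.getD (σs.idxOf s) (initT rk s)

/-- Second-order substitution `t[σs ← us]`. -/
def soSubst [DecidableEq S] (rk : S → ℕ) (σs : List S) (us : List (PTree S)) :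
    PTree S → PTree S :=
  hmap (soHom rk σs us)

/-- The symbol `s` occurs in the tree `t`. -/
def Occurs [DecidableEq S] (s : S) (t : PTree S) : Prop :=
  0 < countSym s t

/-- A tree of rank `k` is footed if `k = 0`, or `k ≥ 1` and it has a foot node:
a position labeled by a symbol of rank `k` whose `i`-th child is the variable `x_i`. -/
def Footed (rk : S → ℕ) (k : ℕ) (t : PTree S) : Prop :=
  k = 0 ∨ ∃ (p : List ℕ) (s : S) (cs : List (PTree S)),
    subt? p t = some (node s cs) ∧ rk s = k ∧ ∀ i < k, cs[i]? = some (var (i + 1))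

end PTree

namespace PTree

variable {S : Type}

theorem ind' {motive : PTree S → Prop} (hv : ∀ i, motive (var i))
    (hn : ∀ s ts, (∀ t ∈ ts, motive t) → motive (node s ts)) : ∀ t, motive t
  | var i => hv i
  | node s ts => hn s ts (fun t ht => ind' hv hn t)
  decreasing_by simp only [PTree.node.sizeOf_spec]; have := List.sizeOf_lt_of_mem ht; omega

theorem varYield_node (s : S) (ts : List (PTree S)) :
    varYield (node s ts) = (ts.map varYield).flatten := by
  rw [varYield]; simp

theorem countVar_node (i : ℕ) (s : S) (ts : List (PTree S)) :
    countVar i (node s ts) = (ts.map (countVar i)).sum := by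
  rw [countVar]; simp

theorem subst_node (f : ℕ → PTree S) (s : S) (ts : List (PTree S)) :
    subst f (node s ts) = node s (ts.map (subst f)) := by
  rw [subst]; simp

theorem countVar_eq_zero {t : PTree S} (h : varYield t = []) (i : ℕ) : countVar i t = 0 := by
  induction t using ind' with
  | hv j => simp [varYield] at h
  | hn s ts ih =>
    rw [countVar_node]
    rw [varYield_node, List.flatten_eq_nil_iff] at h
    refine List.sum_eq_zero ?_
    intro x hx
    simp only [List.mem_map] at hx
    obtain ⟨t, ht, rfl⟩ := hx
    exact ih t ht (h _ (List.mem_map_of_mem ht))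

theorem subst_eq_self {t : PTree S} (h : varYield t = []) (f : ℕ → PTree S) :
    subst f t = t := by
  induction t using ind' with
  | hv j => simp [varYield] at h
  | hn s ts ih =>
    rw [subst_node]
    rw [varYield_node, List.flatten_eq_nil_iff] at h
    congr 1
    have : ts.map (subst f) = ts.map id :=
      List.map_congr_left (fun t ht => ih t ht (h _ (List.mem_map_of_mem ht)))
    simpa using this

theorem elem_le_sum : ∀ (l : List ℕ) (j : ℕ) (hj : j < l.length), l[j] ≤ l.sum
  | a :: l, 0, _ => by simp
  | a :: l, j+1, hj => by
      simp only [List.getElem_cons_succ, List.sum_cons]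
      have := elem_le_sum l j (by simpa using hj)
      omega

theorem two_le_sum : ∀ (l : List ℕ) (j k : ℕ) (hj : j < l.length) (hk : k < l.length),
    j ≠ k → l[j] + l[k] ≤ l.sum
  | a :: l, 0, 0, _, _, h => absurd rfl h
  | a :: l, 0, k+1, hj, hk, _ => by
      simp only [List.getElem_cons_zero, List.getElem_cons_succ, List.sum_cons]
      have := elem_le_sum l k (by simpa using hk)
      omega
  | a :: l, j+1, 0, hj, hk, _ => by
      simp only [List.getElem_cons_zero, List.getElem_cons_succ, List.sum_cons]
      have := elem_le_sum l j (by simpa using hj)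
      omega
  | a :: l, j+1, k+1, hj, hk, h => by
      simp only [List.getElem_cons_succ, List.sum_cons]
      have := two_le_sum l j k (by simpa using hj) (by simpa using hk) (by omega)
      omega

theorem sum_eq_of_others_zero : ∀ (l : List ℕ) (j : ℕ) (hj : j < l.length),
    (∀ k, (hk : k < l.length) → k ≠ j → l[k] = 0) → l.sum = l[j]
  | a :: l, 0, _, h => by
      simp only [List.getElem_cons_zero, List.sum_cons]
      have : l.sum = 0 := by
        refine List.sum_eq_zero ?_
        intro x hx
        obtain ⟨k, hk, rfl⟩ := List.mem_iff_getElem.1 hx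
        have := h (k+1) (by simpa using Nat.succ_lt_succ hk) (by omega)
        simpa using this
      omega
  | a :: l, j+1, hj, h => by
      simp only [List.getElem_cons_succ, List.sum_cons]
      have ha : a = 0 := by exact h 0 (by omega) (by omega)
      have := sum_eq_of_others_zero l j (by simpa using hj)
        (fun k hk hkj => by exact h (k+1) (by simpa using Nat.succ_lt_succ hk) (by omega))
      omega

theorem sum_indicator (i : ℕ) : ∀ m : ℕ,
    (((List.range m).map (fun k => if k+1 = i then 1 else 0)).sum)
      = if 1 ≤ i ∧ i ≤ m then 1 else 0
  | 0 => by simp only [List.range_zero, List.map_nil, List.sum_nil]; split_ifs with h <;> omega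
  | m+1 => by
      rw [List.range_succ, List.map_append, List.sum_append, sum_indicator i m]
      simp only [List.map_cons, List.map_nil, List.sum_cons, List.sum_nil]
      split_ifs <;> omega

end PTree

namespace PTree

theorem main_aux {S : Type} (rk : S → ℕ) : ∀ u : PTree S, WF rk u →
    (∀ i : ℕ, u ≠ var i) → 1 ≤ (varYield u).length →
    ∃ (m : ℕ) (uε : PTree S) (us : List (PTree S)),
      1 ≤ m ∧ us.length = m ∧ WF rk uε ∧ IsPattern m uε ∧ Footed rk m uε ∧
      u = subst (fun i => us.getD (i - 1) (var i)) uε ∧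
      ∀ ui ∈ us, (∀ j : ℕ, ui ≠ var j) → (varYield ui).length < (varYield u).length := by
  intro u
  induction u using ind' with
  | hv i => intro _ hnv _; exact absurd rfl (hnv i)
  | hn s ts ih =>
    intro hwf _ hvars
    have hlen : (varYield (node s ts)).length
        = (ts.map (fun t => (varYield t).length)).sum := by
      rw [varYield_node, List.length_flatten, List.map_map]; rfl
    obtain ⟨hts, hwfc⟩ : ts.length = rk s ∧ ∀ t ∈ ts, WF rk t := by
      cases hwf with | node _ _ h1 h2 => exact ⟨h1, h2⟩
    by_cases hC : ∃ j, ∃ hj : j < ts.length, (∀ i, ts[j] ≠ var i) ∧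
        (∀ k, (hk : k < ts.length) → k ≠ j → varYield ts[k] = [])
    · obtain ⟨j, hj, hnvc, hothers⟩ := hC
      have hmem : ts[j] ∈ ts := List.getElem_mem hj
      have hLc : (varYield (node s ts)).length = (varYield ts[j]).length := by
        rw [hlen]
        have := sum_eq_of_others_zero (ts.map fun t => (varYield t).length) j
          (by simpa using hj) (by
            intro k hk hkj
            rw [List.getElem_map]
            rw [hothers k (by simpa using hk) hkj]
            rfl)
        simpa using this
      have hcv : 1 ≤ (varYield ts[j]).length := by omega
      obtain ⟨m, cε, cs, hm, hcs, hwfε, hpat, hfoot, hsub, hbound⟩ :=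
        ih ts[j] hmem (hwfc _ hmem) hnvc hcv
      refine ⟨m, node s (ts.set j cε), cs, hm, hcs, ?_, ?_, ?_, ?_, ?_⟩
      · refine WF.node _ _ (by simpa using hts) ?_
        intro t ht
        rcases List.mem_or_eq_of_mem_set ht with h | rfl
        · exact hwfc t h
        · exact hwfε
      · intro i
        rw [countVar_node, ← hpat i, List.map_set]
        have := sum_eq_of_others_zero ((ts.map (countVar i)).set j (countVar i cε)) j
          (by simpa using hj) (by
            intro k hk hkj
            rw [List.getElem_set_ne (by omega), List.getElem_map]
            exact countVar_eq_zero (hothers k (by simpa using hk) hkj) i)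
        rw [this, List.getElem_set_self (by simpa using hj)]
      · rcases hfoot with h0 | ⟨p, s', cs', hsubt, hrk, hvars'⟩
        · omega
        · refine Or.inr ⟨j :: p, s', cs', ?_, hrk, hvars'⟩
          have hget : (ts.set j cε)[j]? = some cε := by
            rw [List.getElem?_set_self']
            simp [List.getElem?_eq_getElem hj]
          simp [subt?, hget, hsubt]
      · rw [subst_node, List.map_set, ← hsub]
        congr 1
        refine List.ext_getElem (by simp) ?_
        intro k h1 h2
        by_cases hk : k = j
        · subst hk
          rw [List.getElem_set_self (by simpa using hj)]
        · rw [List.getElem_set_ne (by omega), List.getElem_map]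
          exact (subst_eq_self (hothers k (by simpa using h2) hk) _).symm
      · intro ui hui hnv
        have := hbound ui hui hnv
        omega
    · refine ⟨ts.length, node s ((List.range ts.length).map (fun k => var (k+1))), ts,
        ?_, rfl, ?_, ?_, ?_, ?_, ?_⟩
      · by_contra h
        have h0 : ts.length = 0 := by omega
        have : ts = [] := List.eq_nil_of_length_eq_zero h0
        subst this
        simp [varYield_node] at hvars
      · exact WF.node _ _ (by simpa using hts) (by
          intro t ht
          simp only [List.mem_map, List.mem_range] at ht
          obtain ⟨k, _, rfl⟩ := ht
          exact WF.var _)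
      · intro i
        rw [countVar_node, List.map_map]
        have := sum_indicator i ts.length
        simpa [Function.comp_def, countVar] using this
      · refine Or.inr ⟨[], s, _, rfl, hts.symm, ?_⟩
        intro i hi
        simp [List.getElem?_map, List.getElem?_range, hi]
      · rw [subst_node, List.map_map]
        congr 1
        refine List.ext_getElem (by simp) ?_
        intro k h1 h2
        simp only [List.getElem_map, List.getElem_range, Function.comp_apply]
        rw [subst]
        simp only [Nat.add_sub_cancel]
        exact (List.getD_eq_getElem ts _ (by simpa using h2)).symm
      · intro ui hui hnv
        obtain ⟨j, hj, hjeq⟩ := List.getElem_of_mem hui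
        by_contra hge
        push_neg at hge
        have h1 : (varYield ui).length ≤ (varYield (node s ts)).length := by
          rw [hlen]
          have := elem_le_sum (ts.map fun t => (varYield t).length) j (by simpa using hj)
          rw [List.getElem_map, hjeq] at this
          exact this
        have heq : (varYield ui).length = (varYield (node s ts)).length :=
          le_antisymm h1 hge
        have hoth : ∀ k, (hk : k < ts.length) → k ≠ j → varYield ts[k] = [] := by
          intro k hk hkj
          by_contra hne
          have hpos : 1 ≤ (varYield ts[k]).length := by
            cases h' : varYield ts[k] with
            | nil => exact absurd h' hne
            | cons a l => simp [h']
          have := two_le_sum (ts.map fun t => (varYield t).length) k j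
            (by simpa using hk) (by simpa using hj) hkj
          rw [List.getElem_map, List.getElem_map, hjeq] at this
          omega
        exact hC ⟨j, hj, by rw [hjeq]; exact fun i => hnv i, hoth⟩

end PTree

open PTree in
/-- Decomposition into footed patterns (basic fact of Theorem 5.1): every tree `u` over a
ranked alphabet `Ω` with variables that is not itself a variable and contains at least one
variable occurrence can be written as `u = u_ε[x_i ← u_i | 1 ≤ i ≤ m]` for some `m ≥ 1`,
a footed pattern `u_ε` of rank `m` and trees `u_1, …, u_m` such that every `u_i` that is
not a variable has strictly fewer variable occurrences than `u`. -/
theorem stmt18 {S : Type} (rk : S → ℕ) (u : PTree S)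
    (hwf : WF rk u)
    (hnotvar : ∀ i : ℕ, u ≠ PTree.var i)
    (hvars : 1 ≤ (varYield u).length) :
    ∃ (m : ℕ) (uε : PTree S) (us : List (PTree S)),
      1 ≤ m ∧ us.length = m ∧
      WF rk uε ∧ IsPattern m uε ∧ Footed rk m uε ∧
      u = subst (fun i => us.getD (i - 1) (PTree.var i)) uε ∧
      ∀ ui ∈ us, (∀ j : ℕ, ui ≠ PTree.var j) →
        (varYield ui).length < (varYield u).length := by
  exact PTree.main_aux rk u hwf hnotvar hvars
end
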